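/- Let a>0, b>0, N≤3, and suppose (Cₙ) is a sequence of nonnegative reals converging to C₀ ≥ 0. If tₙ > 0 satisfies a tₙ² + b Cₙ tₙ^{4-N} = 1 for each n, then (tₙ) is bounded and converges to the unique positive root t₀ of a t² + b C₀ t^{4-N} = 1. -/
import Mathlib


theorem stmt_5 (a b : ℝ) (N : ℕ) (ha : 0 < a) (hb : 0 < b)
    (hN1 : 1 ≤ N) (hN3 : N ≤ 3) (C : ℕ → ℝ) (C₀ : ℝ)
    (hCnn : ∀ n, 0 ≤ C n) (hC₀ : 0 ≤ C₀)
    (hCconv : Filter.Tendsto C Filter.atTop (nhds C₀))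
    (t : ℕ → ℝ) (ht : ∀ n, 0 < t n ∧ a * (t n) ^ 2 + b * C n * (t n) ^ (4 - N) = 1) :
    (∃ M : ℝ, ∀ n, |t n| ≤ M) ∧
    ∃ t₀ : ℝ, 0 < t₀ ∧ a * t₀ ^ 2 + b * C₀ * t₀ ^ (4 - N) = 1 ∧
      (∀ s : ℝ, 0 < s → a * s ^ 2 + b * C₀ * s ^ (4 - N) = 1 → s = t₀) ∧
      Filter.Tendsto t Filter.atTop (nhds t₀) := by
  set m := 4 - N with hm
  have hm1 : 1 ≤ m := by omega
  have hm0 : m ≠ 0 := by omega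
  set g : ℝ → ℝ := fun s => a * s ^ 2 + b * C₀ * s ^ m with hg
  have hgmono : StrictMonoOn g (Set.Ici 0) := by
    intro x hx y hy hxy
    simp only [Set.mem_Ici] at hx hy
    have h2 : x ^ 2 < y ^ 2 := by nlinarith
    have hmm : x ^ m ≤ y ^ m := pow_le_pow_left₀ hx hxy.le m
    have h3 : b * C₀ * x ^ m ≤ b * C₀ * y ^ m :=
      mul_le_mul_of_nonneg_left hmm (by positivity)
    simp only [hg]
    nlinarith
  have hgcont : Continuous g := by fun_prop
  set M : ℝ := Real.sqrt (1 / a) with hM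
  have hMpos : 0 < M := Real.sqrt_pos.mpr (by positivity)
  have hMsq : M ^ 2 = 1 / a := Real.sq_sqrt (by positivity)
  have htle : ∀ n, t n ≤ M := by
    intro n
    obtain ⟨htp, heq⟩ := ht n
    have hnn : 0 ≤ b * C n * (t n) ^ m := by
      have := hCnn n
      positivity
    have hsq : (t n) ^ 2 ≤ 1 / a := by
      rw [le_div_iff₀ ha]; nlinarith
    exact (Real.le_sqrt htp.le (by positivity)).mpr hsq
  refine ⟨⟨M, fun n => by rw [abs_of_pos (ht n).1]; exact htle n⟩, ?_⟩
  -- existence of t₀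
  have hB : (0:ℝ) ≤ M + 1 := by linarith
  have hg0 : g 0 = 0 := by simp [hg, hm0, zero_pow hm0]
  have hgB : 1 ≤ g (M + 1) := by
    have h1 : (1:ℝ)/a < (M+1)^2 := by nlinarith
    have h2 : a * (1/a) < a * (M+1)^2 := by exact (mul_lt_mul_iff_right₀ ha).mpr h1
    have h3 : a * (1/a) = 1 := by field_simp
    have h4 : 0 ≤ b * C₀ * (M+1) ^ m := by positivity
    simp only [hg]; nlinarith
  obtain ⟨t₀, ht₀mem, ht₀eq⟩ := intermediate_value_Icc hB hgcont.continuousOn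
    (by rw [hg0]; exact ⟨zero_le_one, hgB⟩ : (1:ℝ) ∈ Set.Icc (g 0) (g (M+1)))
  have ht₀pos : 0 < t₀ := by
    rcases lt_or_eq_of_le ht₀mem.1 with h | h
    · exact h
    · exfalso; rw [← h] at ht₀eq; rw [hg0] at ht₀eq; norm_num at ht₀eq
  refine ⟨t₀, ht₀pos, ht₀eq, ?_, ?_⟩
  · intro s hs hseq
    refine hgmono.injOn hs.le ht₀pos.le ?_
    rw [ht₀eq]; simp only [hg]; exact hseq
  -- convergence
  · have hd : Filter.Tendsto (fun n => b * (C₀ - C n) * (t n) ^ m)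
        Filter.atTop (nhds 0) := by
      have habs : Filter.Tendsto (fun n => b * M ^ m * |C₀ - C n|)
          Filter.atTop (nhds 0) := by
        have h1 : Filter.Tendsto (fun n => |C₀ - C n|) Filter.atTop (nhds 0) := by
          have := (tendsto_const_nhds (x := C₀)).sub hCconv
          simpa using this.abs
        simpa using h1.const_mul (b * M ^ m)
      rw [tendsto_zero_iff_abs_tendsto_zero]
      apply squeeze_zero (fun n => abs_nonneg _) _ habs
      intro n
      have htp := (ht n).1
      have h1 : (t n) ^ m ≤ M ^ m := pow_le_pow_left₀ htp.le (htle n) m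
      have h2 : 0 ≤ (t n) ^ m := by positivity
      rw [abs_mul, abs_mul, abs_of_pos hb, abs_of_nonneg h2]
      have hbnn : 0 ≤ b * |C₀ - C n| := by positivity
      calc b * |C₀ - C n| * (t n) ^ m ≤ b * |C₀ - C n| * M ^ m :=
            mul_le_mul_of_nonneg_left h1 hbnn
        _ = b * M ^ m * |C₀ - C n| := by ring
    have hgt : Filter.Tendsto (fun n => g (t n)) Filter.atTop (nhds 1) := by
      have heq : (fun n => g (t n)) = fun n => 1 + b * (C₀ - C n) * (t n) ^ m := by
        funext n
        have := (ht n).2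
        simp only [hg]; nlinarith [(ht n).2]
      rw [heq]
      simpa using (tendsto_const_nhds (x := (1:ℝ))).add hd
    rw [Metric.tendsto_atTop]
    intro ε hε
    set l : ℝ := max 0 (t₀ - ε) with hl
    have hl0 : 0 ≤ l := le_max_left _ _
    have hllt : l < t₀ := by
      rw [hl, max_lt_iff]; exact ⟨ht₀pos, by linarith⟩
    have h1 : g l < 1 := by rw [← ht₀eq]; exact hgmono (Set.mem_Ici.mpr hl0) (Set.mem_Ici.mpr ht₀pos.le) hllt
    have h2 : 1 < g (t₀ + ε) := by
      rw [← ht₀eq]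
      exact hgmono (Set.mem_Ici.mpr ht₀pos.le) (Set.mem_Ici.mpr (by linarith)) (by linarith)
    have hev : ∀ᶠ n in Filter.atTop, g (t n) ∈ Set.Ioo (g l) (g (t₀ + ε)) :=
      hgt (Ioo_mem_nhds h1 h2)
    rw [Filter.eventually_atTop] at hev
    obtain ⟨n₀, hn₀⟩ := hev
    refine ⟨n₀, fun n hn => ?_⟩
    obtain ⟨hlo, hhi⟩ := hn₀ n hn
    have htp := (ht n).1
    have hlt1 : l < t n := by
      by_contra h
      push_neg at h
      exact absurd (hgmono.monotoneOn (Set.mem_Ici.mpr htp.le) (Set.mem_Ici.mpr hl0) h)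
        (not_le.mpr hlo)
    have hlt2 : t n < t₀ + ε := by
      by_contra h
      push_neg at h
      exact absurd (hgmono.monotoneOn (Set.mem_Ici.mpr (by linarith : (0:ℝ) ≤ t₀ + ε))
        (Set.mem_Ici.mpr htp.le) h) (not_le.mpr hhi)
    have : t₀ - ε ≤ l := le_max_right _ _
    rw [Real.dist_eq, abs_lt]
    constructor <;> linarith
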